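/- Non-degeneracy propagation: let g : ℝ → Matrix (Fin N) (Fin N) ℂ be holomorphic (entire) and satisfy g(qt) = ((q-1)t·Ξ(t) + I) g(t) for all t, where Ξ is entire. If det g(t1) = 0 for some t1, then det g(q^n t1) = 0 for all n ∈ ℕ; consequently if additionally |q| < 1, then det g vanishes identically (since det g is entire and vanishes on a sequence accumulating at 0, provided det g(0) = 0 follows by continuity). -/

import Mathlib

lemma det_differentiable {N : ℕ} (M : ℂ → Matrix (Fin N) (Fin N) ℂ)
    (hM : ∀ i j, Differentiable ℂ fun t => M t i j) :
    Differentiable ℂ fun t => (M t).det := by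
  have : (fun t => (M t).det) =
      fun t => ∑ σ : Equiv.Perm (Fin N), (Equiv.Perm.sign σ : ℂ) * ∏ i, M t (σ i) i := by
    funext t
    simp [Matrix.det_apply, Units.smul_def, zsmul_eq_mul]
  rw [this]
  apply Differentiable.fun_sum
  intro σ _
  exact (Differentiable.fun_finsetProd (fun i _ => hM (σ i) i)).const_mul _

theorem degeneracy_propagation
    (q : ℂ) (hq0 : 0 < ‖q‖) (hq1 : ‖q‖ < 1) (N : ℕ)
    (Ξ : ℂ → Matrix (Fin N) (Fin N) ℂ)
    (hΞ : ∀ i j, Differentiable ℂ (fun t => Ξ t i j))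
    (g : ℂ → Matrix (Fin N) (Fin N) ℂ)
    (hg : ∀ i j, Differentiable ℂ (fun t => g t i j))
    (heq : ∀ t, g (q * t) = (((q - 1) * t) • Ξ t + 1) * g t)
    (t1 : ℂ) (ht1 : (g t1).det = 0) :
    (∀ m : ℕ, (g (q ^ m * t1)).det = 0) ∧ (∀ t, (g t).det = 0) := by
  set f : ℂ → ℂ := fun t => (g t).det with hf
  set φ : ℂ → ℂ := fun t => ((((q - 1) * t) • Ξ t + 1 : Matrix (Fin N) (Fin N) ℂ)).det with hφ
  have hfd : Differentiable ℂ f := det_differentiable g hg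
  have hφd : Differentiable ℂ φ := by
    apply det_differentiable
    intro i j
    simp only [Matrix.add_apply, Matrix.smul_apply, smul_eq_mul]
    exact ((differentiable_const _ |>.mul differentiable_id).mul (hΞ i j)).add
      (differentiable_const _)
  have hφ0 : φ 0 = 1 := by simp [hφ]
  have hkey : ∀ t, f (q * t) = φ t * f t := by
    intro t
    simp only [hf, hφ, heq t, Matrix.det_mul]
  -- Part 1
  have part1 : ∀ m : ℕ, f (q ^ m * t1) = 0 := by
    intro m
    induction m with
    | zero => simpa using ht1
    | succ n ih =>
      have : q ^ (n + 1) * t1 = q * (q ^ n * t1) := by ring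
      rw [this, hkey, ih, mul_zero]
  refine ⟨part1, ?_⟩
  -- f 0 = 0
  have htend : Filter.Tendsto (fun m : ℕ => q ^ m * t1) Filter.atTop (nhds 0) := by
    have := tendsto_pow_atTop_nhds_zero_of_norm_lt_one (x := q) (by exact hq1)
    simpa using this.mul_const t1
  have hf0 : f 0 = 0 := by
    have h1 : Filter.Tendsto (fun m : ℕ => f (q ^ m * t1)) Filter.atTop (nhds (f 0)) :=
      (hfd.continuous.tendsto 0).comp htend
    have h2 : Filter.Tendsto (fun m : ℕ => f (q ^ m * t1)) Filter.atTop (nhds 0) := by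
      simp only [part1]; exact tendsto_const_nhds
    exact tendsto_nhds_unique h1 h2
  -- order argument : f vanishes near 0
  have hfa : AnalyticAt ℂ f 0 := hfd.analyticAt 0
  have hev : ∀ᶠ z in nhds 0, f z = 0 := by
    rw [← analyticOrderAt_eq_top]
    by_contra hne
    obtain ⟨n, hn⟩ := WithTop.ne_top_iff_exists.mp hne
    obtain ⟨h, hha, hh0, hhe⟩ := (hfa.analyticOrderAt_eq_natCast (n := n)).mp hn.symm
    have hn1 : 1 ≤ n := by
      rcases Nat.eq_zero_or_pos n with h0 | h1
      · exfalso
        have := hhe.self_of_nhds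
        rw [h0] at this
        simp [hf0] at this
        exact hh0 this.symm
      · exact h1
    -- eventually in 𝓝[≠] 0 : q^n * h (q z) = φ z * h z
    have hq : Filter.Tendsto (fun z : ℂ => q * z) (nhds 0) (nhds 0) := by
      simpa using (continuous_mul_left q : Continuous fun z : ℂ => q * z).tendsto 0
    have hev2 : ∀ᶠ z in nhds (0 : ℂ), q ^ n * h (q * z) = φ z * h z ∨ z = 0 := by
      filter_upwards [hhe, hq.eventually hhe] with z h1 h2
      rcases eq_or_ne z 0 with rfl | hz
      · right; rfl
      · left
        have hk := hkey z
        rw [h1, h2] at hk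
        simp only [sub_zero, smul_eq_mul, mul_pow] at hk
        exact mul_right_cancel₀ (pow_ne_zero n hz) (by linear_combination hk)
    have hev3 : ∀ᶠ z in nhdsWithin (0 : ℂ) {0}ᶜ, q ^ n * h (q * z) = φ z * h z := by
      filter_upwards [hev2.filter_mono nhdsWithin_le_nhds,
        self_mem_nhdsWithin] with z hz hz'
      exact hz.resolve_right hz'
    -- take limits
    have hcont : Filter.Tendsto (fun z : ℂ => q ^ n * h (q * z) - φ z * h z)
        (nhdsWithin 0 {0}ᶜ) (nhds (q ^ n * h 0 - φ 0 * h 0)) := by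
      apply Filter.Tendsto.mono_left _ nhdsWithin_le_nhds
      have hhc : ContinuousAt h 0 := hha.continuousAt
      have : Filter.Tendsto (fun z : ℂ => h (q * z)) (nhds 0) (nhds (h 0)) :=
        hhc.tendsto.comp (by simpa using hq)
      exact ((tendsto_const_nhds.mul this).sub
        ((hφd.continuous.tendsto 0).mul hhc.tendsto))
    have hlim0 : Filter.Tendsto (fun z : ℂ => q ^ n * h (q * z) - φ z * h z)
        (nhdsWithin 0 {0}ᶜ) (nhds 0) := by
      apply Filter.Tendsto.congr' _ tendsto_const_nhds
      filter_upwards [hev3] with z hz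
      rw [hz, sub_self]
    have : q ^ n * h 0 - φ 0 * h 0 = 0 := tendsto_nhds_unique hcont hlim0
    rw [hφ0, one_mul] at this
    have hqn : q ^ n = 1 := by
      have h' : (q ^ n - 1) * h 0 = 0 := by linear_combination this
      rcases mul_eq_zero.mp h' with h'' | h''
      · exact sub_eq_zero.mp h''
      · exact absurd h'' hh0
    have : ‖q‖ ^ n = 1 := by
      rw [← norm_pow, hqn, norm_one]
    have hlt : ‖q‖ ^ n < 1 := pow_lt_one₀ (norm_nonneg q) hq1 (by omega)
    linarith
  -- identity theorem
  intro t
  have hglobal : Set.EqOn f 0 Set.univ := by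
    apply AnalyticOnNhd.eqOn_zero_of_preconnected_of_frequently_eq_zero
      (fun z _ => hfd.analyticAt z) isPreconnected_univ (Set.mem_univ 0)
    exact (hev.filter_mono nhdsWithin_le_nhds).frequently
  exact hglobal (Set.mem_univ t)
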